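/- Let A, B ∈ ℝ^{n×n} be positive semidefinite with rank(A) ≥ rank(B), and let Γ : [0,1] → ℝ^{n×n} be a map with Γ_t positive semidefinite for all t, Γ₀ = A and Γ₁ = B. Then W₂²(Γ_s, Γ_t) = (t−s)²·W₂²(A, B) for all 0 ≤ s ≤ t ≤ 1 (i.e., Γ is a constant-speed geodesic from A to B) if and only if there exist matrices G and M with G·Gᵀ = A, M·Mᵀ = B, Gᵀ·M positive semidefinite, and Γ_t = ((1−t)·G + t·M)·((1−t)·G + t·M)ᵀ for all t ∈ [0,1]. -/

import Mathlib

open Matrix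

/-- The positive semidefinite square root of a psd matrix (junk value `0` otherwise). -/
noncomputable def psdSqrt {n : ℕ} (M : Matrix (Fin n) (Fin n) ℝ) : Matrix (Fin n) (Fin n) ℝ :=
  letI := Classical.propDecidable M.PosSemidef
  if h : M.PosSemidef then
    (h.1.eigenvectorUnitary : Matrix (Fin n) (Fin n) ℝ) *
      diagonal ((↑) ∘ Real.sqrt ∘ h.1.eigenvalues) *
      (star h.1.eigenvectorUnitary : Matrix (Fin n) (Fin n) ℝ) else 0

/-- `trace √(√A·B·√A)`. -/
noncomputable def sqrtTr {n : ℕ} (A B : Matrix (Fin n) (Fin n) ℝ) : ℝ :=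
  (psdSqrt (psdSqrt A * B * psdSqrt A)).trace

/-- `T` is an optimal transport matrix from `A` to `B`. -/
def IsOT {n : ℕ} (A B T : Matrix (Fin n) (Fin n) ℝ) : Prop :=
  T * A * Tᵀ = B ∧ (A * T).trace = sqrtTr A B

/-- Squared Bures–Wasserstein distance. -/
noncomputable def W2sq {n : ℕ} (A B : Matrix (Fin n) (Fin n) ℝ) : ℝ :=
  A.trace + B.trace - 2 * sqrtTr A B

namespace BWaux

variable {n : ℕ}

open scoped MatrixOrder

local notation "Mat" => Matrix (Fin n) (Fin n) ℝ

lemma conjT (M : Mat) : Mᴴ = Mᵀ := conjTranspose_eq_transpose_of_trivial M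

lemma psdSqrt_of_psd {M : Mat} (h : M.PosSemidef) : psdSqrt M = CFC.sqrt M := by
  rw [psdSqrt]
  rw [dif_pos h, CFC.sqrt_eq_real_sqrt M h.nonneg, cfcₙ_eq_cfc (hf0 := Real.sqrt_zero),
    h.1.cfc_eq, IsHermitian.cfc, Unitary.conjStarAlgAut_apply]
  rfl

lemma psdSqrt_psd (M : Mat) : (psdSqrt M).PosSemidef := by
  rw [psdSqrt]
  split
  · rename_i h
    have := psdSqrt_of_psd h
    rw [psdSqrt, dif_pos h] at this
    rw [this]
    exact (CFC.sqrt_nonneg M).posSemidef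
  · exact Matrix.PosSemidef.zero

lemma psdSqrt_mul_self {M : Mat} (h : M.PosSemidef) : psdSqrt M * psdSqrt M = M := by
  rw [psdSqrt_of_psd h]
  exact CFC.sqrt_mul_sqrt_self M h.nonneg

lemma psdSqrt_transpose (M : Mat) : (psdSqrt M)ᵀ = psdSqrt M := by
  rw [← conjT]
  exact (psdSqrt_psd M).isHermitian

lemma psdSqrt_eq {M S : Mat} (hS : S.PosSemidef) (hSM : S * S = M) : psdSqrt M = S := by
  have hM : M.PosSemidef := by
    rw [← hSM]
    nth_rewrite 1 [← hS.isHermitian]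
    exact Matrix.posSemidef_conjTranspose_mul_self S
  rw [psdSqrt_of_psd hM]
  exact CFC.sqrt_unique hSM hS.nonneg

/-- Frobenius inner product. -/
noncomputable def ip (X Y : Mat) : ℝ := (Xᵀ * Y).trace

lemma ip_comm (X Y : Mat) : ip X Y = ip Y X := by
  rw [ip, ← Matrix.trace_transpose, Matrix.transpose_mul, Matrix.transpose_transpose, ip]

lemma ip_add_left (X Y Z : Mat) : ip (X + Y) Z = ip X Z + ip Y Z := by
  simp [ip, Matrix.transpose_add, Matrix.add_mul]

lemma ip_add_right (X Y Z : Mat) : ip X (Y + Z) = ip X Y + ip X Z := by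
  simp [ip, Matrix.mul_add]

lemma ip_sub_left (X Y Z : Mat) : ip (X - Y) Z = ip X Z - ip Y Z := by
  simp [ip, Matrix.transpose_sub, Matrix.sub_mul]

lemma ip_sub_right (X Y Z : Mat) : ip X (Y - Z) = ip X Y - ip X Z := by
  simp [ip, Matrix.mul_sub]

lemma ip_smul_left (c : ℝ) (X Y : Mat) : ip (c • X) Y = c * ip X Y := by
  simp [ip, Matrix.transpose_smul, Matrix.smul_mul]

lemma ip_smul_right (c : ℝ) (X Y : Mat) : ip X (c • Y) = c * ip X Y := by
  simp [ip, Matrix.mul_smul]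

lemma ip_eq_sum (X Y : Mat) : ip X Y = ∑ i, ∑ j, X i j * Y i j := by
  rw [ip, Matrix.trace]
  simp only [Matrix.diag_apply, Matrix.mul_apply, Matrix.transpose_apply]
  rw [Finset.sum_comm]

lemma ip_self_nonneg (X : Mat) : 0 ≤ ip X X := by
  rw [ip_eq_sum]
  exact Finset.sum_nonneg fun i _ => Finset.sum_nonneg fun j _ => mul_self_nonneg _

lemma eq_zero_of_ip_self (X : Mat) (h : ip X X = 0) : X = 0 := by
  rw [ip_eq_sum] at h
  ext i j
  have h1 : ∀ i ∈ Finset.univ (α := Fin n), (0:ℝ) ≤ ∑ j, X i j * X i j :=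
    fun i _ => Finset.sum_nonneg fun j _ => mul_self_nonneg _
  have h2 := (Finset.sum_eq_zero_iff_of_nonneg h1).1 h i (Finset.mem_univ i)
  have h3 := (Finset.sum_eq_zero_iff_of_nonneg
    (fun j _ => mul_self_nonneg (X i j))).1 h2 j (Finset.mem_univ j)
  have := mul_self_eq_zero.1 h3
  simpa using this

lemma ip_CS (X Y : Mat) : ip X Y ^ 2 ≤ ip X X * ip Y Y := by
  rw [ip_eq_sum, ip_eq_sum, ip_eq_sum]
  have h := Finset.sum_mul_sq_le_sq_mul_sq (Finset.univ : Finset (Fin n × Fin n))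
    (fun p => X p.1 p.2) (fun p => Y p.1 p.2)
  simp only [← Finset.sum_product', Finset.univ_product_univ] at *
  calc (∑ p : Fin n × Fin n, X p.1 p.2 * Y p.1 p.2) ^ 2
      ≤ (∑ p : Fin n × Fin n, X p.1 p.2 ^ 2) * ∑ p : Fin n × Fin n, Y p.1 p.2 ^ 2 := h
    _ = (∑ p : Fin n × Fin n, X p.1 p.2 * X p.1 p.2) *
        ∑ p : Fin n × Fin n, Y p.1 p.2 * Y p.1 p.2 := by simp [pow_two]

/-- Orthogonal matrix. -/
def IsOrth (U : Mat) : Prop := U * Uᵀ = 1 ∧ Uᵀ * U = 1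

lemma IsOrth.transpose {U : Mat} (h : IsOrth U) : IsOrth Uᵀ := by
  refine ⟨?_, ?_⟩ <;> simp [Matrix.transpose_transpose, h.1, h.2]

lemma IsOrth.mul {U V : Mat} (hU : IsOrth U) (hV : IsOrth V) : IsOrth (U * V) := by
  constructor
  · rw [Matrix.transpose_mul, show U * V * (Vᵀ * Uᵀ) = U * (V * Vᵀ) * Uᵀ by
      noncomm_ring, hV.1, mul_one, hU.1]
  · rw [Matrix.transpose_mul, show Vᵀ * Uᵀ * (U * V) = Vᵀ * (Uᵀ * U) * V by
      noncomm_ring, hU.2, mul_one, hV.2]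

lemma psd_conj {S : Mat} (hS : S.PosSemidef) (U : Mat) : (U * S * Uᵀ).PosSemidef := by
  have := hS.mul_mul_conjTranspose_same U
  rwa [conjT] at this

lemma psdSqrt_conj {S : Mat} (hS : S.PosSemidef) {U : Mat} (hU : IsOrth U) :
    psdSqrt (U * S * Uᵀ) = U * psdSqrt S * Uᵀ := by
  refine psdSqrt_eq (psd_conj (psdSqrt_psd S) U) ?_
  have : U * psdSqrt S * Uᵀ * (U * psdSqrt S * Uᵀ) = U * (psdSqrt S * (Uᵀ * U) * psdSqrt S) * Uᵀ := by
    noncomm_ring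
  rw [this, hU.2, mul_one, psdSqrt_mul_self hS]


lemma psd_spectral {P : Mat} (hP : P.PosSemidef) :
    ∃ (Q : Mat) (d : Fin n → ℝ), IsOrth Q ∧ (∀ i, 0 ≤ d i) ∧
      P = Q * Matrix.diagonal d * Qᵀ := by
  refine ⟨hP.1.eigenvectorUnitary, hP.1.eigenvalues, ⟨?_, ?_⟩, hP.eigenvalues_nonneg, ?_⟩
  · have h := (Matrix.mem_unitaryGroup_iff).mp hP.1.eigenvectorUnitary.2
    rwa [Matrix.star_eq_conjTranspose, conjTranspose_eq_transpose_of_trivial] at h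
  · have h := (Matrix.mem_unitaryGroup_iff').mp hP.1.eigenvectorUnitary.2
    rwa [Matrix.star_eq_conjTranspose, conjTranspose_eq_transpose_of_trivial] at h
  · have h := hP.1.spectral_theorem
    rw [Unitary.conjStarAlgAut_apply] at h
    rwa [Matrix.star_eq_conjTranspose, conjTranspose_eq_transpose_of_trivial,
      RCLike.ofReal_real_eq_id, Function.id_comp] at h

lemma trace_orth_mul {P U : Mat} (hP : P.PosSemidef) (hU : IsOrth U) :
    (U * P).trace ≤ P.trace ∧ ((U * P).trace = P.trace → U * P = P) := by
  obtain ⟨Q, d, hQ, hd, hPeq⟩ := psd_spectral hP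
  set R : Mat := Qᵀ * U * Q with hR
  have hRorth : IsOrth R := (hQ.transpose.mul (by exact hU)).mul hQ
  have hUQ : U * Q = Q * R := by
    rw [hR, show Q * (Qᵀ * U * Q) = (Q * Qᵀ) * U * Q by noncomm_ring, hQ.1, one_mul]
  have hUP : U * P = Q * (R * Matrix.diagonal d) * Qᵀ := by
    rw [hPeq, show U * (Q * Matrix.diagonal d * Qᵀ) = (U * Q) * Matrix.diagonal d * Qᵀ by
      noncomm_ring, hUQ]
    noncomm_ring
  have htrconj : ∀ X : Mat, (Q * X * Qᵀ).trace = X.trace := by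
    intro X
    rw [Matrix.trace_mul_cycle, show Qᵀ * Q * X = (Qᵀ * Q) * X from rfl, hQ.2, one_mul]
  have htrUP : (U * P).trace = ∑ i, R i i * d i := by
    rw [hUP, htrconj, Matrix.trace]
    simp [Matrix.diag_apply, Matrix.mul_diagonal]
  have htrP : P.trace = ∑ i, d i := by
    rw [hPeq, htrconj, Matrix.trace_diagonal]
  have hRcol : ∀ j, ∑ k, R k j * R k j = 1 := by
    intro j
    have := congrFun (congrFun hRorth.2 j) j
    simpa [Matrix.mul_apply, Matrix.transpose_apply, Matrix.one_apply] using this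
  have hRdiag : ∀ i, R i i ≤ 1 := by
    intro i
    have h1 : R i i * R i i ≤ ∑ k, R k i * R k i :=
      Finset.single_le_sum (f := fun k => R k i * R k i)
        (fun k _ => mul_self_nonneg _) (Finset.mem_univ i)
    rw [hRcol i] at h1
    nlinarith
  have hterm : ∀ i ∈ Finset.univ (α := Fin n), R i i * d i ≤ d i := fun i _ =>
    mul_le_of_le_one_left (hd i) (hRdiag i)
  constructor
  · rw [htrUP, htrP]
    exact Finset.sum_le_sum hterm
  · intro heq
    rw [htrUP, htrP] at heq
    have hall := (Finset.sum_eq_sum_iff_of_le hterm).1 heq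
    have hRD : R * Matrix.diagonal d = Matrix.diagonal d := by
      ext i j
      rw [Matrix.mul_diagonal, Matrix.diagonal_apply]
      by_cases hij : i = j
      · subst hij
        simp only [if_pos rfl]
        exact hall i (Finset.mem_univ i)
      · rw [if_neg hij]
        by_cases hdj : d j = 0
        · rw [hdj, mul_zero]
        · have hRjj : R j j = 1 := by
            have h := hall j (Finset.mem_univ j)
            exact mul_right_cancel₀ hdj (by rw [one_mul]; exact h)
          have hsum := hRcol j
          have hsplit := Finset.sum_erase_eq_sub (f := fun k => R k j * R k j)
            (Finset.mem_univ j)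
          have hzero : ∑ k ∈ Finset.univ.erase j, R k j * R k j = 0 := by
            rw [hsplit]
            rw [hsum, hRjj, one_mul]
            ring
          have := (Finset.sum_eq_zero_iff_of_nonneg
            (fun k _ => mul_self_nonneg (R k j))).1 hzero i
            (Finset.mem_erase.2 ⟨hij, Finset.mem_univ i⟩)
          rw [mul_self_eq_zero.1 this, zero_mul]
    rw [hUP, hRD, ← hPeq]



lemma psd_mul_transpose_self (C : Mat) : (C * Cᵀ).PosSemidef := by
  have := Matrix.posSemidef_self_mul_conjTranspose C
  rwa [conjT] at this

lemma psd_transpose_mul_self (C : Mat) : (Cᵀ * C).PosSemidef := by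
  have := Matrix.posSemidef_conjTranspose_mul_self C
  rwa [conjT] at this

/-- Polar decomposition for invertible matrices. -/
lemma polar_of_isUnit {C : Mat} (h : IsUnit C.det) :
    ∃ U : Mat, IsOrth U ∧ C = psdSqrt (C * Cᵀ) * U := by
  set P := psdSqrt (C * Cᵀ) with hPdef
  have hP2 : P * P = C * Cᵀ := psdSqrt_mul_self (psd_mul_transpose_self C)
  have hPt : Pᵀ = P := psdSqrt_transpose _
  have hPdet : IsUnit P.det := by
    have h2 : IsUnit ((C * Cᵀ).det) := by
      rw [Matrix.det_mul, Matrix.det_transpose]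
      exact h.mul h
    rw [← hP2, Matrix.det_mul] at h2
    exact isUnit_of_mul_isUnit_left h2
  have hPinvT : (P⁻¹)ᵀ = P⁻¹ := by rw [Matrix.transpose_nonsing_inv, hPt]
  have hleft : (P⁻¹ * C) * (P⁻¹ * C)ᵀ = 1 := by
    rw [Matrix.transpose_mul, hPinvT,
      show P⁻¹ * C * (Cᵀ * P⁻¹) = P⁻¹ * (C * Cᵀ) * P⁻¹ by noncomm_ring, ← hP2,
      show P⁻¹ * (P * P) * P⁻¹ = (P⁻¹ * P) * (P * P⁻¹) by noncomm_ring,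
      Matrix.nonsing_inv_mul _ hPdet, Matrix.mul_nonsing_inv _ hPdet, one_mul]
  refine ⟨P⁻¹ * C, ⟨hleft, mul_eq_one_comm.mp hleft⟩, ?_⟩
  rw [← mul_assoc, Matrix.mul_nonsing_inv _ hPdet, one_mul]

lemma exists_unit_pert (C : Mat) :
    ∃ ε : ℕ → ℝ, (∀ k, IsUnit (C + ε k • 1 : Mat).det) ∧
      Filter.Tendsto ε Filter.atTop (nhds 0) := by
  classical
  have hp : (Matrix.charpoly (-C)) ≠ 0 := (Matrix.charpoly_monic _).ne_zero
  have hfin := Polynomial.finite_setOf_isRoot hp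
  have hev : ∀ x : ℝ, Polynomial.eval x (Matrix.charpoly (-C)) = (C + x • 1 : Mat).det := by
    intro x
    rw [Matrix.charpoly, ← Polynomial.coe_evalRingHom, RingHom.map_det]
    congr 1
    ext i j
    rw [RingHom.mapMatrix_apply, Matrix.map_apply, Matrix.charmatrix_apply]
    by_cases hij : i = j
    · subst hij
      simp [Matrix.diagonal_apply_eq, Matrix.one_apply_eq]
      ring
    · simp [Matrix.diagonal_apply_ne _ hij, Matrix.one_apply_ne hij]
  have hex : ∀ k : ℕ, ∃ x : ℝ, x ∈ Set.Ioo (0:ℝ) (1/((k:ℝ)+1)) ∧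
      ¬ Polynomial.IsRoot (Matrix.charpoly (-C)) x := by
    intro k
    have hpos : (0:ℝ) < 1/((k:ℝ)+1) := by positivity
    have hinf := Set.Ioo_infinite hpos
    obtain ⟨x, hx⟩ := (hinf.diff hfin).nonempty
    exact ⟨x, hx.1, hx.2⟩
  choose ε hε1 hε2 using hex
  refine ⟨ε, fun k => ?_, ?_⟩
  · rw [isUnit_iff_ne_zero]
    intro hdet
    exact hε2 k (by rw [Polynomial.IsRoot, hev]; exact hdet)
  · refine tendsto_of_tendsto_of_tendsto_of_le_of_le tendsto_const_nhds
      tendsto_one_div_add_atTop_nhds_zero_nat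
      (fun k => (hε1 k).1.le) (fun k => (hε1 k).2.le)

lemma psd_of_tendsto {f : ℕ → Mat} {P : Mat} (h : ∀ k, (f k).PosSemidef)
    (ht : Filter.Tendsto f Filter.atTop (nhds P)) : P.PosSemidef := by
  have hent : ∀ i j, Filter.Tendsto (fun k => f k i j) Filter.atTop (nhds (P i j)) := by
    intro i j
    exact ((continuous_id.matrix_elem i j).tendsto P).comp ht
  refine Matrix.PosSemidef.of_dotProduct_mulVec_nonneg ?_ ?_
  · rw [Matrix.IsHermitian, conjT]
    ext i j
    rw [Matrix.transpose_apply]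
    have hsymm : (fun k => f k j i) = fun k => f k i j := by
      funext k
      have h1 := (h k).1
      rw [Matrix.IsHermitian, conjT] at h1
      have := congrFun (congrFun h1 i) j
      rwa [Matrix.transpose_apply] at this
    exact tendsto_nhds_unique (hsymm ▸ hent j i) (hent i j)
  · intro x
    have hc : Continuous fun M : Mat => dotProduct (star x) (M *ᵥ x) := by
      simp only [dotProduct, Matrix.mulVec]
      refine continuous_finset_sum _ fun i _ => (continuous_const.mul ?_)
      exact continuous_finset_sum _ fun j _ =>
        (continuous_id.matrix_elem i j).mul continuous_const
    have hq := (hc.tendsto P).comp ht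
    exact ge_of_tendsto hq (Filter.Eventually.of_forall fun k => (h k).dotProduct_mulVec_nonneg x)

/-- Polar decomposition, general case. -/
lemma polar (C : Mat) : ∃ U : Mat, IsOrth U ∧ C = psdSqrt (C * Cᵀ) * U := by
  obtain ⟨ε, hunit, hε0⟩ := exists_unit_pert C
  set Cs : ℕ → Mat := fun k => C + ε k • 1 with hCs
  have hCt : Filter.Tendsto Cs Filter.atTop (nhds C) := by
    have h1 : Filter.Tendsto (fun k => (ε k) • (1 : Mat)) Filter.atTop
        (nhds ((0:ℝ) • (1 : Mat))) := hε0.smul tendsto_const_nhds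
    rw [zero_smul] at h1
    simpa using tendsto_const_nhds.add h1
  choose U hUorth hUfac using fun k => polar_of_isUnit (hunit k)
  have hmem : ∀ k i j, U k i j ∈ Set.Icc (-1:ℝ) 1 := by
    intro k i j
    have hrow := congrFun (congrFun (hUorth k).1 i) i
    simp only [Matrix.mul_apply, Matrix.transpose_apply, Matrix.one_apply_eq] at hrow
    have hle := Finset.single_le_sum (f := fun j => U k i j * U k i j)
      (fun j _ => mul_self_nonneg _) (Finset.mem_univ j)
    rw [hrow] at hle
    have hle' : U k i j * U k i j ≤ 1 := hle
    constructor <;> nlinarith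
  set K : Set (Fin n → Fin n → ℝ) :=
    Set.univ.pi fun _ => Set.univ.pi fun _ => Set.Icc (-1:ℝ) 1 with hK
  have hKcomp : IsCompact K :=
    isCompact_univ_pi fun _ => isCompact_univ_pi fun _ => isCompact_Icc
  have hmemK : ∀ k, (U k : Fin n → Fin n → ℝ) ∈ K := by
    intro k
    rw [hK]
    refine Set.mem_univ_pi.mpr ?_
    intro i
    rw [Set.mem_univ_pi]
    intro j
    exact hmem k i j
  obtain ⟨Ul', _, φ, hφ, hUφ⟩ := hKcomp.tendsto_subseq hmemK
  have hUlex : ∃ V : Mat, Filter.Tendsto (fun k => U (φ k)) Filter.atTop (nhds V) :=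
    ⟨Ul', hUφ⟩
  obtain ⟨Ul, hUt⟩ := hUlex
  have hφtop : Filter.Tendsto φ Filter.atTop Filter.atTop := hφ.tendsto_atTop
  have hCφ : Filter.Tendsto (fun k => Cs (φ k)) Filter.atTop (nhds C) := hCt.comp hφtop
  have hUtt : Filter.Tendsto (fun k => (U (φ k))ᵀ) Filter.atTop (nhds (Ul)ᵀ) :=
    ((continuous_id.matrix_transpose).tendsto Ul).comp hUt
  have hCst : Filter.Tendsto (fun k => (Cs (φ k))ᵀ) Filter.atTop (nhds Cᵀ) :=
    ((continuous_id.matrix_transpose).tendsto C).comp hCφ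
  have hPfac : ∀ k, psdSqrt (Cs k * (Cs k)ᵀ) = Cs k * (U k)ᵀ := by
    intro k
    show psdSqrt ((C + ε k • 1) * (C + ε k • 1)ᵀ) = (C + ε k • 1) * (U k)ᵀ
    conv_rhs => rw [hUfac k]
    rw [mul_assoc, (hUorth k).1, mul_one]
  have hPt : Filter.Tendsto (fun k => psdSqrt (Cs (φ k) * (Cs (φ k))ᵀ)) Filter.atTop
      (nhds (C * (Ul)ᵀ)) := by
    simp only [hPfac]
    exact hCφ.mul hUtt
  have hPpsd : (C * (Ul)ᵀ).PosSemidef := psd_of_tendsto (fun k => psdSqrt_psd _) hPt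
  have hPP : (C * (Ul)ᵀ) * (C * (Ul)ᵀ) = C * Cᵀ := by
    have h1 := hPt.mul hPt
    have h2 : (fun k => psdSqrt (Cs (φ k) * (Cs (φ k))ᵀ) * psdSqrt (Cs (φ k) * (Cs (φ k))ᵀ))
        = fun k => Cs (φ k) * (Cs (φ k))ᵀ :=
      funext fun k => psdSqrt_mul_self (psd_mul_transpose_self _)
    rw [h2] at h1
    exact tendsto_nhds_unique h1 (hCφ.mul hCst)
  have hUlorth : IsOrth Ul := by
    constructor
    · refine tendsto_nhds_unique (hUt.mul hUtt) ?_
      have h2 : (fun k => U (φ k) * (U (φ k))ᵀ) = fun _ => (1 : Mat) :=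
        funext fun k => (hUorth (φ k)).1
      rw [h2]
      exact tendsto_const_nhds
    · refine tendsto_nhds_unique (hUtt.mul hUt) ?_
      have h2 : (fun k => (U (φ k))ᵀ * U (φ k)) = fun _ => (1 : Mat) :=
        funext fun k => (hUorth (φ k)).2
      rw [h2]
      exact tendsto_const_nhds
  have hfac : C = (C * (Ul)ᵀ) * Ul := by
    have h1 := hPt.mul hUt
    have h2 : (fun k => psdSqrt (Cs (φ k) * (Cs (φ k))ᵀ) * U (φ k)) = fun k => Cs (φ k) :=
      funext fun k => (hUfac (φ k)).symm
    rw [h2] at h1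
    exact tendsto_nhds_unique hCφ h1
  exact ⟨Ul, hUlorth, by rw [psdSqrt_eq hPpsd hPP]; exact hfac⟩

/-- Nuclear norm. -/
noncomputable def nuc (C : Mat) : ℝ := (psdSqrt (C * Cᵀ)).trace

lemma nuc_psd {P : Mat} (hP : P.PosSemidef) : nuc P = P.trace := by
  have hPt : Pᵀ = P := by rw [← conjT]; exact hP.1
  rw [nuc, hPt, psdSqrt_eq hP rfl]

lemma nuc_orth_right {C U : Mat} (hU : IsOrth U) : nuc (C * U) = nuc C := by
  rw [nuc, Matrix.transpose_mul,
    show C * U * (Uᵀ * Cᵀ) = C * (U * Uᵀ) * Cᵀ by noncomm_ring, hU.1, mul_one, nuc]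

lemma nuc_orth_left {C U : Mat} (hU : IsOrth U) : nuc (U * C) = nuc C := by
  rw [nuc, Matrix.transpose_mul,
    show U * C * (Cᵀ * Uᵀ) = U * (C * Cᵀ) * Uᵀ by noncomm_ring,
    psdSqrt_conj (psd_mul_transpose_self C) hU, Matrix.trace_mul_cycle, hU.2, one_mul, nuc]

lemma trace_le_nuc (C : Mat) : C.trace ≤ nuc C := by
  obtain ⟨U, hU, hfac⟩ := polar C
  calc C.trace = (psdSqrt (C * Cᵀ) * U).trace := by rw [← hfac]
    _ = (U * psdSqrt (C * Cᵀ)).trace := Matrix.trace_mul_comm _ U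
    _ ≤ (psdSqrt (C * Cᵀ)).trace := (trace_orth_mul (psdSqrt_psd _) hU).1
    _ = nuc C := rfl

lemma psd_of_trace_eq_nuc {C : Mat} (h : C.trace = nuc C) : C.PosSemidef := by
  obtain ⟨U, hU, hfac⟩ := polar C
  set P := psdSqrt (C * Cᵀ) with hP
  have hPt : Pᵀ = P := psdSqrt_transpose _
  have htr : (U * P).trace = P.trace := by
    rw [Matrix.trace_mul_comm U P]
    calc (P * U).trace = C.trace := by rw [← hfac]
      _ = nuc C := h
      _ = P.trace := rfl
  have hUP := (trace_orth_mul (psdSqrt_psd _) hU).2 htr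
  have hPU : P * Uᵀ = P := by
    have := congrArg Matrix.transpose hUP
    rwa [Matrix.transpose_mul, hPt] at this
  have hCP : C = P := by
    have h2 := congrArg (fun X => X * U) hPU
    simp only [mul_assoc, hU.2, mul_one] at h2
    rw [hfac]
    exact h2.symm
  rw [hCP]
  exact psdSqrt_psd _

lemma lift_polar {G A : Mat} (hGA : G * Gᵀ = A) : ∃ U, IsOrth U ∧ G = psdSqrt A * U := by
  obtain ⟨U, hU, h⟩ := polar G
  exact ⟨U, hU, by rwa [hGA] at h⟩

lemma sqrtTr_eq_nuc {A B : Mat} (hB : B.PosSemidef) :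
    sqrtTr A B = nuc (psdSqrt A * psdSqrt B) := by
  rw [sqrtTr, nuc]
  congr 2
  rw [Matrix.transpose_mul, psdSqrt_transpose, psdSqrt_transpose,
    show psdSqrt A * psdSqrt B * (psdSqrt B * psdSqrt A)
      = psdSqrt A * (psdSqrt B * psdSqrt B) * psdSqrt A by noncomm_ring,
    psdSqrt_mul_self hB]

lemma nuc_lift {A B G M : Mat} (hGA : G * Gᵀ = A) (hMB : M * Mᵀ = B) :
    nuc (Gᵀ * M) = sqrtTr A B := by
  obtain ⟨U, hU, hG⟩ := lift_polar hGA
  obtain ⟨V, hV, hM⟩ := lift_polar hMB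
  have hB : B.PosSemidef := by rw [← hMB]; exact psd_mul_transpose_self M
  rw [sqrtTr_eq_nuc hB, hG, hM, Matrix.transpose_mul, psdSqrt_transpose,
    show Uᵀ * psdSqrt A * (psdSqrt B * V) = Uᵀ * (psdSqrt A * psdSqrt B * V) by noncomm_ring,
    nuc_orth_left hU.transpose, nuc_orth_right hV]

lemma trace_lift_le {A B G M : Mat} (hGA : G * Gᵀ = A) (hMB : M * Mᵀ = B) :
    (Gᵀ * M).trace ≤ sqrtTr A B :=
  (trace_le_nuc _).trans_eq (nuc_lift hGA hMB)

lemma trace_lift_eq {A B G M : Mat} (hGA : G * Gᵀ = A) (hMB : M * Mᵀ = B)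
    (h : (Gᵀ * M).PosSemidef) : (Gᵀ * M).trace = sqrtTr A B := by
  rw [← nuc_lift hGA hMB, nuc_psd h]

lemma psd_lift_of_trace_eq {A B G M : Mat} (hGA : G * Gᵀ = A) (hMB : M * Mᵀ = B)
    (h : (Gᵀ * M).trace = sqrtTr A B) : (Gᵀ * M).PosSemidef :=
  psd_of_trace_eq_nuc (h.trans (nuc_lift hGA hMB).symm)

lemma exists_opt_lift {B : Mat} (hB : B.PosSemidef) (G : Mat) :
    ∃ M : Mat, M * Mᵀ = B ∧ (Gᵀ * M).PosSemidef := by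
  obtain ⟨U, hU, hG⟩ := lift_polar (rfl : G * Gᵀ = G * Gᵀ)
  set SA := psdSqrt (G * Gᵀ) with hSA
  set SB := psdSqrt B with hSB
  have hSAt : SAᵀ = SA := psdSqrt_transpose _
  have hSBt : SBᵀ = SB := psdSqrt_transpose _
  obtain ⟨V, hV, hC⟩ := polar (SA * SB)
  refine ⟨SB * Vᵀ * U, ?_, ?_⟩
  · have : SB * Vᵀ * U * (SB * Vᵀ * U)ᵀ = SB * Vᵀ * (U * Uᵀ) * V * SBᵀ := by
      rw [Matrix.transpose_mul, Matrix.transpose_mul, Matrix.transpose_transpose]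
      noncomm_ring
    rw [this, hU.1, hSBt, mul_one,
      show SB * Vᵀ * V * SB = SB * (Vᵀ * V) * SB by noncomm_ring, hV.2, mul_one]
    exact psdSqrt_mul_self hB
  · have hGt : Gᵀ = Uᵀ * SA := by rw [hG, Matrix.transpose_mul, hSAt]
    have : Gᵀ * (SB * Vᵀ * U) = Uᵀ * ((SA * SB) * Vᵀ) * U := by
      rw [hGt]; noncomm_ring
    rw [this, hC, show psdSqrt (SA * SB * (SA * SB)ᵀ) * V * Vᵀ
        = psdSqrt (SA * SB * (SA * SB)ᵀ) * (V * Vᵀ) by noncomm_ring, hV.1, mul_one]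
    have := psd_conj (psdSqrt_psd (SA * SB * (SA * SB)ᵀ)) Uᵀ
    rwa [Matrix.transpose_transpose] at this

lemma ip_GM (G M : Mat) : ip G M = (Gᵀ * M).trace := rfl

lemma ip_diff_eq {A B G M : Mat} (hGA : G * Gᵀ = A) (hMB : M * Mᵀ = B) :
    ip (M - G) (M - G) = A.trace + B.trace - 2 * (Gᵀ * M).trace := by
  have h1 : ip G G = A.trace := by rw [ip, ← hGA]; exact Matrix.trace_mul_comm Gᵀ G
  have h2 : ip M M = B.trace := by rw [ip, ← hMB]; exact Matrix.trace_mul_comm Mᵀ M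
  have h3 : ip M G = (Gᵀ * M).trace := by rw [ip_comm]; rfl
  rw [ip_sub_left, ip_sub_right, ip_sub_right, h1, h2, h3, ip_GM]
  ring

lemma W2sq_eq_ip {A B G M : Mat} (hGA : G * Gᵀ = A) (hMB : M * Mᵀ = B)
    (hpsd : (Gᵀ * M).PosSemidef) : W2sq A B = ip (M - G) (M - G) := by
  rw [W2sq, ip_diff_eq hGA hMB, trace_lift_eq hGA hMB hpsd]

lemma psdSqrt_lift {A : Mat} (hA : A.PosSemidef) : psdSqrt A * (psdSqrt A)ᵀ = A := by
  rw [psdSqrt_transpose]; exact psdSqrt_mul_self hA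

lemma W2sq_nonneg {A B : Mat} (hA : A.PosSemidef) (hB : B.PosSemidef) : 0 ≤ W2sq A B := by
  obtain ⟨M, hMB, hpsd⟩ := exists_opt_lift hB (psdSqrt A)
  rw [W2sq_eq_ip (psdSqrt_lift hA) hMB hpsd]
  exact ip_self_nonneg _

lemma le_of_sq_le_sq' {x K : ℝ} (h : x^2 ≤ K^2) (hK : 0 ≤ K) : x ≤ K := by nlinarith

lemma ip_expand3 (u v w : Mat) : ip (u+v+w) (u+v+w)
    = ip u u + ip v v + ip w w + 2*ip u v + 2*ip u w + 2*ip v w := by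
  simp only [ip_add_left, ip_add_right]
  rw [ip_comm v u, ip_comm w u, ip_comm w v]
  ring

lemma chain {A B : Mat} (hA : A.PosSemidef) (hB : B.PosSemidef)
    (Γ : ℝ → Mat) (hΓpsd : ∀ r ∈ Set.Icc (0:ℝ) 1, (Γ r).PosSemidef)
    (hΓ0 : Γ 0 = A) (hΓ1 : Γ 1 = B)
    (hyp : ∀ s t : ℝ, 0 ≤ s → s ≤ t → t ≤ 1 →
        W2sq (Γ s) (Γ t) = (t - s) ^ 2 * W2sq A B)
    {s t : ℝ} (hs : 0 ≤ s) (hst : s ≤ t) (ht : t ≤ 1) :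
    ∃ M : Mat, M * Mᵀ = B ∧ ((psdSqrt A)ᵀ * M).PosSemidef ∧
      Γ s = ((1-s) • psdSqrt A + s • M) * ((1-s) • psdSqrt A + s • M)ᵀ ∧
      Γ t = ((1-t) • psdSqrt A + t • M) * ((1-t) • psdSqrt A + t • M)ᵀ := by
  have hGA : psdSqrt A * (psdSqrt A)ᵀ = A := psdSqrt_lift hA
  set G := psdSqrt A with hGdef
  have hs1 : s ≤ 1 := hst.trans ht
  have ht0 : 0 ≤ t := hs.trans hst
  have hΓs : (Γ s).PosSemidef := hΓpsd s ⟨hs, hs1⟩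
  have hΓt : (Γ t).PosSemidef := hΓpsd t ⟨ht0, ht⟩
  obtain ⟨Ks, hKs, hGKs⟩ := exists_opt_lift hΓs G
  obtain ⟨Kt, hKt, hKsKt⟩ := exists_opt_lift hΓt Ks
  obtain ⟨M, hMB, hKtM⟩ := exists_opt_lift hB Kt
  set d2 := W2sq A B with hd2
  have hd2nn : 0 ≤ d2 := W2sq_nonneg hA hB
  set u := Ks - G with hu
  set v := Kt - Ks with hv
  set w := M - Kt with hw
  have e1 : ip u u = s^2 * d2 := by
    rw [hu, ← W2sq_eq_ip hGA hKs hGKs]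
    have h0 := hyp 0 s le_rfl hs hs1
    rw [hΓ0] at h0
    rw [h0]
    ring
  have e2 : ip v v = (t-s)^2 * d2 := by
    rw [hv, ← W2sq_eq_ip hKs hKt hKsKt]
    exact hyp s t hs hst ht
  have e3 : ip w w = (1-t)^2 * d2 := by
    rw [hw, ← W2sq_eq_ip hKt hMB hKtM]
    have h0 := hyp t 1 ht0 ht le_rfl
    rw [hΓ1] at h0
    exact h0
  have hb1 : ip u v ≤ s * (t-s) * d2 := by
    refine le_of_sq_le_sq' ?_
      (mul_nonneg (mul_nonneg hs (sub_nonneg.2 hst)) hd2nn)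
    calc ip u v ^ 2 ≤ ip u u * ip v v := ip_CS u v
      _ = (s * (t-s) * d2)^2 := by rw [e1, e2]; ring
  have hb2 : ip u w ≤ s * (1-t) * d2 := by
    refine le_of_sq_le_sq' ?_
      (mul_nonneg (mul_nonneg hs (sub_nonneg.2 ht)) hd2nn)
    calc ip u w ^ 2 ≤ ip u u * ip w w := ip_CS u w
      _ = (s * (1-t) * d2)^2 := by rw [e1, e3]; ring
  have hb3 : ip v w ≤ (t-s) * (1-t) * d2 := by
    refine le_of_sq_le_sq' ?_
      (mul_nonneg (mul_nonneg (sub_nonneg.2 hst) (sub_nonneg.2 ht)) hd2nn)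
    calc ip v w ^ 2 ≤ ip v v * ip w w := ip_CS v w
      _ = ((t-s) * (1-t) * d2)^2 := by rw [e2, e3]; ring
  have hMG : M - G = u + v + w := by rw [hu, hv, hw]; abel
  have hlow : d2 ≤ ip u u + ip v v + ip w w + 2*ip u v + 2*ip u w + 2*ip v w := by
    rw [← ip_expand3, ← hMG, ip_diff_eq hGA hMB]
    have hle := trace_lift_le hGA hMB
    have hW : d2 = A.trace + B.trace - 2 * sqrtTr A B := rfl
    linarith
  rw [e1, e2, e3] at hlow
  have hc1 : ip u v = s * (t-s) * d2 := by nlinarith [hb1, hb2, hb3, hlow]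
  have hc2 : ip u w = s * (1-t) * d2 := by nlinarith [hb1, hb2, hb3, hlow]
  have hc3 : ip v w = (t-s) * (1-t) * d2 := by nlinarith [hb1, hb2, hb3, hlow]
  have htrGM : ((G)ᵀ * M).trace = sqrtTr A B := by
    have hup : ip (M - G) (M - G) = d2 := by
      rw [hMG, ip_expand3, e1, e2, e3, hc1, hc2, hc3]
      ring
    rw [ip_diff_eq hGA hMB] at hup
    have hW : d2 = A.trace + B.trace - 2 * sqrtTr A B := rfl
    linarith
  have hGMpsd := psd_lift_of_trace_eq hGA hMB htrGM
  have hKsEq : Ks = (1-s) • G + s • M := by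
    have hz : Ks - ((1-s) • G + s • M) = u - s • (u + v + w) := by
      rw [hu, hv, hw]
      module
    have hzip : ip (u - s • (u+v+w)) (u - s • (u+v+w)) = 0 := by
      simp only [ip_sub_left, ip_sub_right, ip_smul_left, ip_smul_right,
        ip_add_left, ip_add_right]
      rw [ip_comm v u, ip_comm w u, ip_comm w v]
      rw [e1, e2, e3, hc1, hc2, hc3]
      ring
    have hzero := eq_zero_of_ip_self (Ks - ((1-s) • G + s • M)) (by rw [hz]; exact hzip)
    have := sub_eq_zero.mp hzero
    exact this
  have hKtEq : Kt = (1-t) • G + t • M := by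
    have hz : Kt - ((1-t) • G + t • M) = (u + v) - t • (u + v + w) := by
      rw [hu, hv, hw]
      module
    have hzip : ip ((u+v) - t • (u+v+w)) ((u+v) - t • (u+v+w)) = 0 := by
      simp only [ip_sub_left, ip_sub_right, ip_smul_left, ip_smul_right,
        ip_add_left, ip_add_right]
      rw [ip_comm v u, ip_comm w u, ip_comm w v]
      rw [e1, e2, e3, hc1, hc2, hc3]
      ring
    have hzero := eq_zero_of_ip_self (Kt - ((1-t) • G + t • M)) (by rw [hz]; exact hzip)
    have := sub_eq_zero.mp hzero
    exact this
  refine ⟨M, hMB, hGMpsd, ?_, ?_⟩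
  · rw [← hKs, hKsEq]
  · rw [← hKt, hKtEq]

lemma expand_sq (r : ℝ) (G M : Mat) :
    ((1-r) • G + r • M) * ((1-r) • G + r • M)ᵀ
      = ((1-r)*(1-r)) • (G * Gᵀ) + (r*(1-r)) • (G * Mᵀ + M * Gᵀ) + (r*r) • (M * Mᵀ) := by
  rw [Matrix.transpose_add, Matrix.transpose_smul, Matrix.transpose_smul]
  simp only [Matrix.add_mul, Matrix.mul_add, Matrix.smul_mul, Matrix.mul_smul, smul_smul,
    smul_add]
  rw [show r * (1-r) = (1-r) * r by ring]
  abel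

lemma cross_eq {B G M M' : Mat} (hMB : M * Mᵀ = B) (hM'B : M' * M'ᵀ = B)
    (h : ((1-(1/2:ℝ)) • G + (1/2:ℝ) • M) * ((1-(1/2:ℝ)) • G + (1/2:ℝ) • M)ᵀ
        = ((1-(1/2:ℝ)) • G + (1/2:ℝ) • M') * ((1-(1/2:ℝ)) • G + (1/2:ℝ) • M')ᵀ) :
    G * Mᵀ + M * Gᵀ = G * M'ᵀ + M' * Gᵀ := by
  rw [expand_sq, expand_sq, hMB, hM'B] at h
  have h2 := add_right_cancel h
  have h3 := add_left_cancel h2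
  have hne : ((1/2:ℝ) * (1 - (1/2:ℝ))) ≠ 0 := by norm_num
  exact smul_right_injective _ hne h3

lemma form_indep {B G M M' : Mat} (hMB : M * Mᵀ = B) (hM'B : M' * M'ᵀ = B)
    (hcross : G * Mᵀ + M * Gᵀ = G * M'ᵀ + M' * Gᵀ) (r : ℝ) :
    ((1-r) • G + r • M) * ((1-r) • G + r • M)ᵀ
      = ((1-r) • G + r • M') * ((1-r) • G + r • M')ᵀ := by
  rw [expand_sq, expand_sq, hMB, hM'B, hcross]

lemma smul_psd {c : ℝ} (hc : 0 ≤ c) {P : Mat} (hP : P.PosSemidef) : (c • P).PosSemidef := by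
  refine Matrix.PosSemidef.of_dotProduct_mulVec_nonneg ?_ ?_
  · rw [Matrix.IsHermitian, conjT, Matrix.transpose_smul,
      show Pᵀ = P from by rw [← conjT]; exact hP.1]
  · intro x
    have h := hP.dotProduct_mulVec_nonneg x
    rw [Matrix.smul_mulVec, dotProduct_smul]
    exact mul_nonneg hc h

lemma comb_expand (s t : ℝ) (G M : Mat) :
    ((1-s) • G + s • M)ᵀ * ((1-t) • G + t • M)
      = ((1-s)*(1-t)) • (Gᵀ * G) + ((1-s)*t) • (Gᵀ * M)
        + (s*(1-t)) • (Mᵀ * G) + (s*t) • (Mᵀ * M) := by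
  rw [Matrix.transpose_add, Matrix.transpose_smul, Matrix.transpose_smul]
  simp only [Matrix.add_mul, Matrix.mul_add, Matrix.smul_mul, Matrix.mul_smul, smul_smul,
    smul_add]
  module

lemma psd_comb {G M : Mat} (hGM : (Gᵀ * M).PosSemidef) {s t : ℝ}
    (hs0 : 0 ≤ s) (hs1 : s ≤ 1) (ht0 : 0 ≤ t) (ht1 : t ≤ 1) :
    (((1-s) • G + s • M)ᵀ * ((1-t) • G + t • M)).PosSemidef := by
  rw [comb_expand]
  have hMtG : (Mᵀ * G).PosSemidef := by
    have := hGM.transpose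
    rwa [Matrix.transpose_mul, Matrix.transpose_transpose] at this
  have h1 : (0:ℝ) ≤ 1 - s := sub_nonneg.2 hs1
  have h2 : (0:ℝ) ≤ 1 - t := sub_nonneg.2 ht1
  exact (((smul_psd (mul_nonneg h1 h2) (psd_transpose_mul_self G)).add
    (smul_psd (mul_nonneg h1 ht0) hGM)).add
    (smul_psd (mul_nonneg hs0 h2) hMtG)).add
    (smul_psd (mul_nonneg hs0 ht0) (psd_transpose_mul_self M))

lemma ip_form (s t : ℝ) (G M : Mat) :
    ip ((1-s) • G + s • M) ((1-t) • G + t • M)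
      = (1-s)*(1-t) * ip G G + ((1-s)*t + s*(1-t)) * ip G M + s*t * ip M M := by
  rw [ip_add_left, ip_add_right, ip_add_right, ip_smul_left, ip_smul_left, ip_smul_left,
    ip_smul_left, ip_smul_right, ip_smul_right, ip_smul_right, ip_smul_right, ip_comm M G]
  ring

/-- The reverse (easy) direction. -/
lemma reverse_dir {A B G M : Mat} (hGA : G * Gᵀ = A) (hMB : M * Mᵀ = B)
    (hGM : (Gᵀ * M).PosSemidef) (Γ : ℝ → Mat)
    (hform : ∀ r ∈ Set.Icc (0:ℝ) 1,
      Γ r = ((1 - r) • G + r • M) * ((1 - r) • G + r • M)ᵀ)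
    {s t : ℝ} (hs : 0 ≤ s) (hst : s ≤ t) (ht : t ≤ 1) :
    W2sq (Γ s) (Γ t) = (t - s) ^ 2 * W2sq A B := by
  have hs1 : s ≤ 1 := hst.trans ht
  have ht0 : 0 ≤ t := hs.trans hst
  set Xs := (1-s) • G + s • M with hXs
  set Xt := (1-t) • G + t • M with hXt
  have hΓs : Γ s = Xs * Xsᵀ := hform s ⟨hs, hs1⟩
  have hΓt : Γ t = Xt * Xtᵀ := hform t ⟨ht0, ht⟩
  have hpsd : (Xsᵀ * Xt).PosSemidef := psd_comb hGM hs hs1 ht0 ht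
  have hst1 : sqrtTr (Γ s) (Γ t) = (Xsᵀ * Xt).trace :=
    (trace_lift_eq hΓs.symm hΓt.symm hpsd).symm
  have hstAB : sqrtTr A B = (Gᵀ * M).trace := (trace_lift_eq hGA hMB hGM).symm
  have htrΓs : (Γ s).trace = ip Xs Xs := by
    rw [hΓs, Matrix.trace_mul_comm]; rfl
  have htrΓt : (Γ t).trace = ip Xt Xt := by
    rw [hΓt, Matrix.trace_mul_comm]; rfl
  have htrA : A.trace = ip G G := by rw [← hGA, Matrix.trace_mul_comm]; rfl
  have htrB : B.trace = ip M M := by rw [← hMB, Matrix.trace_mul_comm]; rfl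
  have hXsXt : (Xsᵀ * Xt).trace = ip Xs Xt := rfl
  have hGMip : (Gᵀ * M).trace = ip G M := rfl
  rw [W2sq, W2sq, hst1, hstAB, htrΓs, htrΓt, htrA, htrB, hXsXt, hGMip, hXs, hXt,
    ip_form s s, ip_form s t, ip_form t t]
  ring

end BWaux

/-- For psd `A, B` with `rank A ≥ rank B`, a path `Γ` of psd matrices
with `Γ₀ = A`, `Γ₁ = B` is a constant-speed geodesic
(`W₂²(Γ_s, Γ_t) = (t−s)²·W₂²(A,B)` for `0 ≤ s ≤ t ≤ 1`) iff it is of the form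
`Γ_t = ((1−t)·G + t·M)·((1−t)·G + t·M)ᵀ` with `G·Gᵀ = A`, `M·Mᵀ = B`, `Gᵀ·M ⪰ 0`. -/
theorem stmt12 {n : ℕ} (A B : Matrix (Fin n) (Fin n) ℝ)
    (hA : A.PosSemidef) (hB : B.PosSemidef) (hrk : B.rank ≤ A.rank)
    (Γ : ℝ → Matrix (Fin n) (Fin n) ℝ)
    (hΓpsd : ∀ t ∈ Set.Icc (0 : ℝ) 1, (Γ t).PosSemidef)
    (hΓ0 : Γ 0 = A) (hΓ1 : Γ 1 = B) :
    (∀ s t : ℝ, 0 ≤ s → s ≤ t → t ≤ 1 →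
        W2sq (Γ s) (Γ t) = (t - s) ^ 2 * W2sq A B) ↔
      ∃ G M : Matrix (Fin n) (Fin n) ℝ, G * Gᵀ = A ∧ M * Mᵀ = B ∧
        (Gᵀ * M).PosSemidef ∧
        ∀ t ∈ Set.Icc (0 : ℝ) 1,
          Γ t = ((1 - t) • G + t • M) * ((1 - t) • G + t • M)ᵀ := by
  constructor
  · intro hyp
    obtain ⟨M0, hM0B, hGM0, hΓhalf1, _⟩ := BWaux.chain hA hB Γ hΓpsd hΓ0 hΓ1 hyp
      (by norm_num : (0:ℝ) ≤ 1/2) le_rfl (by norm_num)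
    refine ⟨psdSqrt A, M0, BWaux.psdSqrt_lift hA, hM0B, hGM0, ?_⟩
    intro r hr
    rcases le_total r (1/2 : ℝ) with hr2 | hr2
    · obtain ⟨M', hM'B, _, hΓr, hΓh'⟩ := BWaux.chain hA hB Γ hΓpsd hΓ0 hΓ1 hyp
        hr.1 hr2 (by norm_num)
      have hcross := BWaux.cross_eq hM'B hM0B (hΓh'.symm.trans hΓhalf1)
      rw [hΓr]
      exact BWaux.form_indep hM'B hM0B hcross r
    · obtain ⟨M', hM'B, _, hΓh', hΓr⟩ := BWaux.chain hA hB Γ hΓpsd hΓ0 hΓ1 hyp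
        (by norm_num : (0:ℝ) ≤ 1/2) hr2 hr.2
      have hcross := BWaux.cross_eq hM'B hM0B (hΓh'.symm.trans hΓhalf1)
      rw [hΓr]
      exact BWaux.form_indep hM'B hM0B hcross r
  · rintro ⟨G, M, hGA, hMB, hGM, hform⟩ s t hs hst ht
    exact BWaux.reverse_dir hGA hMB hGM Γ hform hs hst ht
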